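/- Let G be a finite abelian group with subgroups G₁, G₂ of equal order D satisfying G₁ + G₂ = G, and let F: G₁ × G₂ → ℂˣ be a perfect pairing. Define f: G × G → ℂ by f(μ,ν) = D⁻¹·F(μ,ν) if μ ∈ G₁ and ν ∈ G₂, and f(μ,ν) = 0 otherwise, and define the matrix m: G × G → ℂ by m(μ,ν) = Σ_{μ',ν' ∈ G} f(μ−μ',ν−ν')·f(ν',μ'). Then m is invertible as a complex matrix indexed by G if and only if Rad₀ is trivial, where Rad₀ := {(μ₁,μ₂) ∈ G₁ × G₂ : μ₁ + μ₂ = 0 and Sym(F)((μ₁,μ₂),(ν₁,ν₂)) = 1 for all (ν₁,ν₂) ∈ G₁ × G₂ with ν₁ + ν₂ = 0}. -/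

import Mathlib

open Finset

private lemma char_sum_eq_zero {G : Type*} [AddCommGroup G] [Fintype G]
    (A : AddSubgroup G) [DecidablePred (· ∈ A)] (φ : G → ℂ)
    (hmul : ∀ x ∈ A, ∀ y ∈ A, φ (x + y) = φ x * φ y)
    (x₀ : G) (hx₀ : x₀ ∈ A) (hne : φ x₀ ≠ 1) :
    ∑ x ∈ univ.filter (· ∈ A), φ x = 0 := by
  have h : φ x₀ * ∑ x ∈ univ.filter (· ∈ A), φ x = ∑ x ∈ univ.filter (· ∈ A), φ x := by
    rw [Finset.mul_sum]
    refine Finset.sum_nbij' (fun x => x₀ + x) (fun y => -x₀ + y) ?_ ?_ ?_ ?_ ?_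
    · intro a ha
      simp only [mem_filter, mem_univ, true_and] at ha ⊢
      exact A.add_mem hx₀ ha
    · intro b hb
      simp only [mem_filter, mem_univ, true_and] at hb ⊢
      exact A.add_mem (A.neg_mem hx₀) hb
    · intro a _; exact neg_add_cancel_left x₀ a
    · intro a _; exact add_neg_cancel_left x₀ a
    · intro a ha
      simp only [mem_filter, mem_univ, true_and] at ha
      exact (hmul x₀ hx₀ a ha).symm
  by_contra hS
  exact hne (mul_right_cancel₀ hS (h.trans (one_mul _).symm))

private lemma exists_dual {G : Type*} [AddCommGroup G] [Fintype G] [DecidableEq G]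
    (A B : AddSubgroup G) [DecidablePred (· ∈ A)] [DecidablePred (· ∈ B)]
    (F : G → G → ℂˣ)
    (hmulA : ∀ x ∈ A, ∀ x' ∈ A, ∀ t ∈ B, F (x + x') t = F x t * F x' t)
    (hmulB : ∀ x ∈ A, ∀ t ∈ B, ∀ t' ∈ B, F x (t + t') = F x t * F x t')
    (hperf : ∀ t ∈ B, (∀ x ∈ A, F x t = 1) → t = 0)
    (χ : G → ℂ) (hχ : ∀ t t' : G, χ (t + t') = χ t * χ t') (hχ0 : χ 0 = 1) :
    ∃ x ∈ A, ∀ t ∈ B, (F x t : ℂ) * χ t = 1 := by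
  have hzero : ∀ x ∈ A, F x 0 = 1 := by
    intro x hx
    have h := hmulB x hx 0 (zero_mem _) 0 (zero_mem _)
    rw [add_zero] at h
    exact (left_eq_mul.mp h)
  have hinner : ∀ t ∈ B, t ≠ 0 → ∑ x ∈ univ.filter (· ∈ A), (F x t : ℂ) = 0 := by
    intro t ht htne
    obtain ⟨x₀, hx₀, hx₀ne⟩ : ∃ x ∈ A, F x t ≠ 1 := by
      by_contra hcon
      push_neg at hcon
      exact htne (hperf t ht hcon)
    refine char_sum_eq_zero A _ ?_ x₀ hx₀ ?_
    · intro x hx y hy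
      exact_mod_cast congrArg Units.val (hmulA x hx y hy t ht)
    · intro hval
      exact hx₀ne (Units.ext (hval.trans Units.val_one.symm))
  have hTot : ∑ x ∈ univ.filter (· ∈ A), ∑ t ∈ univ.filter (· ∈ B), (F x t : ℂ) * χ t ≠ 0 := by
    rw [Finset.sum_comm]
    have : ∀ t ∈ univ.filter (· ∈ B),
        ∑ x ∈ univ.filter (· ∈ A), (F x t : ℂ) * χ t
          = if t = 0 then ((univ.filter (· ∈ A)).card : ℂ) else 0 := by
      intro t ht
      simp only [mem_filter, mem_univ, true_and] at ht
      by_cases h0 : t = 0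
      · subst h0
        rw [if_pos rfl]
        have hone : ∀ x ∈ univ.filter (· ∈ A), (F x 0 : ℂ) * χ 0 = 1 := by
          intro x hx
          simp only [mem_filter, mem_univ, true_and] at hx
          rw [hzero x hx, hχ0, Units.val_one, mul_one]
        rw [Finset.sum_congr rfl hone, Finset.sum_const, nsmul_eq_mul, mul_one]
      · rw [if_neg h0, ← Finset.sum_mul, hinner t ht h0, zero_mul]
    rw [Finset.sum_congr rfl this, Finset.sum_eq_single_of_mem 0
      (Finset.mem_filter.mpr ⟨Finset.mem_univ _, zero_mem _⟩) (fun b _ hb => if_neg hb), if_pos rfl]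
    have hpos : 0 < (univ.filter (· ∈ A)).card :=
      Finset.card_pos.mpr ⟨0, Finset.mem_filter.mpr ⟨Finset.mem_univ _, zero_mem _⟩⟩
    exact_mod_cast hpos.ne'
  obtain ⟨x, hxmem, hxne⟩ := Finset.exists_ne_zero_of_sum_ne_zero hTot
  simp only [mem_filter, mem_univ, true_and] at hxmem
  refine ⟨x, hxmem, ?_⟩
  by_contra hcon
  push_neg at hcon
  obtain ⟨t₀, ht₀, ht₀ne⟩ := hcon
  refine hxne (char_sum_eq_zero B (fun t => (F x t : ℂ) * χ t) ?_ t₀ ht₀ ht₀ne)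
  intro s hs u hu
  have := congrArg Units.val (hmulB x hxmem s hs u hu)
  push_cast at this
  rw [this, hχ s u]
  ring

private lemma dual_unique {G : Type*} [AddCommGroup G] (A B : AddSubgroup G)
    (F : G → G → ℂˣ)
    (hmulA : ∀ x ∈ A, ∀ x' ∈ A, ∀ t ∈ B, F (x + x') t = F x t * F x' t)
    (hperf : ∀ x ∈ A, (∀ t ∈ B, F x t = 1) → x = 0)
    (χ : G → ℂ) (x x' : G) (hx : x ∈ A) (hx' : x' ∈ A)
    (h1 : ∀ t ∈ B, (F x t : ℂ) * χ t = 1) (h2 : ∀ t ∈ B, (F x' t : ℂ) * χ t = 1) :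
    x = x' := by
  have hzero : ∀ t ∈ B, F 0 t = 1 := by
    intro t ht
    have h := hmulA 0 (zero_mem _) 0 (zero_mem _) t ht
    rw [add_zero] at h
    exact left_eq_mul.mp h
  have hneg : ∀ t ∈ B, F (-x') t = (F x' t)⁻¹ := by
    intro t ht
    have h := hmulA x' hx' (-x') (A.neg_mem hx') t ht
    rw [add_neg_cancel, hzero t ht] at h
    exact (inv_eq_of_mul_eq_one_right h.symm).symm
  have heq : ∀ t ∈ B, F x t = F x' t := by
    intro t ht
    have hχt : χ t ≠ 0 := by
      intro h0
      have := h1 t ht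
      rw [h0, mul_zero] at this
      exact one_ne_zero this.symm
    exact Units.ext (mul_right_cancel₀ hχt ((h1 t ht).trans (h2 t ht).symm))
  have : x + -x' = 0 := by
    refine hperf _ (A.add_mem hx (A.neg_mem hx')) ?_
    intro t ht
    rw [hmulA x hx (-x') (A.neg_mem hx') t ht, hneg t ht, heq t ht, mul_inv_cancel]
  exact add_neg_eq_zero.mp this

/-- for a perfect pairing `F : G₁ × G₂ → ℂˣ` with `G₁ + G₂ = G`,
the monodromy matrix `m(μ,ν) = Σ_{μ',ν'} f(μ−μ',ν−ν')·f(ν',μ')` is invertible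
iff `Rad₀` is trivial. -/
theorem stmt12 {G : Type*} [AddCommGroup G] [Fintype G] [DecidableEq G]
    (G₁ G₂ : AddSubgroup G) [DecidablePred (· ∈ G₁)] [DecidablePred (· ∈ G₂)]
    (D : ℕ) (hD1 : Nat.card G₁ = D) (hD2 : Nat.card G₂ = D)
    (hsum : G₁ ⊔ G₂ = ⊤)
    (F : G → G → ℂˣ)
    (hF1 : ∀ μ μ' ν : G, μ ∈ G₁ → μ' ∈ G₁ → ν ∈ G₂ →
      F (μ + μ') ν = F μ ν * F μ' ν)
    (hF2 : ∀ μ ν ν' : G, μ ∈ G₁ → ν ∈ G₂ → ν' ∈ G₂ →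
      F μ (ν + ν') = F μ ν * F μ ν')
    (hperfL : ∀ μ ∈ G₁, (∀ ν ∈ G₂, F μ ν = 1) → μ = 0)
    (hperfR : ∀ ν ∈ G₂, (∀ μ ∈ G₁, F μ ν = 1) → ν = 0)
    (f : G → G → ℂ)
    (hf : ∀ μ ν : G, f μ ν =
      if μ ∈ G₁ ∧ ν ∈ G₂ then ((D : ℂ))⁻¹ * (F μ ν : ℂ) else 0) :
    IsUnit (Matrix.of fun μ ν : G => ∑ μ' : G, ∑ ν' : G,
        f (μ - μ') (ν - ν') * f ν' μ') ↔
      (∀ μ₁ μ₂ : G, μ₁ ∈ G₁ → μ₂ ∈ G₂ → μ₁ + μ₂ = 0 →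
        (∀ ν₁ ν₂ : G, ν₁ ∈ G₁ → ν₂ ∈ G₂ → ν₁ + ν₂ = 0 →
          F μ₁ ν₂ * F ν₁ μ₂ = 1) →
        μ₁ = 0 ∧ μ₂ = 0) := by
  have hD0 : (D : ℂ) ≠ 0 := by
    have : 0 < D := hD1 ▸ Nat.card_pos
    exact_mod_cast this.ne'
  have hF0R : ∀ x ∈ G₁, F x 0 = 1 := by
    intro x hx
    have h := hF2 x 0 0 hx (zero_mem _) (zero_mem _)
    rw [add_zero] at h; exact left_eq_mul.mp h
  have hF0L : ∀ t ∈ G₂, F 0 t = 1 := by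
    intro t ht
    have h := hF1 0 0 t (zero_mem _) (zero_mem _) ht
    rw [add_zero] at h; exact left_eq_mul.mp h
  have hFnegL : ∀ x ∈ G₁, ∀ t ∈ G₂, F (-x) t = (F x t)⁻¹ := by
    intro x hx t ht
    have h := hF1 x (-x) t hx (G₁.neg_mem hx) ht
    rw [add_neg_cancel, hF0L t ht] at h
    exact (inv_eq_of_mul_eq_one_right h.symm).symm
  have hFnegR : ∀ x ∈ G₁, ∀ t ∈ G₂, F x (-t) = (F x t)⁻¹ := by
    intro x hx t ht
    have h := hF2 x t (-t) hx ht (G₂.neg_mem ht)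
    rw [add_neg_cancel, hF0R x hx] at h
    exact (inv_eq_of_mul_eq_one_right h.symm).symm
  -- dual elements
  have hexA : ∀ χ : AddChar G ℂ, ∃ x ∈ G₁, ∀ t ∈ G₂, (F x t : ℂ) * χ t = 1 := by
    intro χ
    exact exists_dual G₁ G₂ F (fun x hx x' hx' t ht => hF1 x x' t hx hx' ht)
      (fun x hx t ht t' ht' => hF2 x t t' hx ht ht') hperfR χ
      (fun t t' => AddChar.map_add_eq_mul χ t t') (AddChar.map_zero_eq_one χ)
  have hexB : ∀ χ : AddChar G ℂ, ∃ y ∈ G₂, ∀ x ∈ G₁, (F x y : ℂ) * χ x = 1 := by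
    intro χ
    exact exists_dual G₂ G₁ (fun a b => F b a)
      (fun y hy y' hy' x hx => hF2 x y y' hx hy hy')
      (fun y hy x hx x' hx' => hF1 x x' y hx hx' hy) hperfL χ
      (fun t t' => AddChar.map_add_eq_mul χ t t') (AddChar.map_zero_eq_one χ)
  choose Af hAmem hAprop using hexA
  choose Bf hBmem hBprop using hexB
  have uniqA : ∀ (χ : AddChar G ℂ) (x : G), x ∈ G₁ →
      (∀ t ∈ G₂, (F x t : ℂ) * χ t = 1) → x = Af χ := by
    intro χ x hx hp
    exact dual_unique G₁ G₂ F (fun a ha a' ha' t ht => hF1 a a' t ha ha' ht) hperfL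
      χ x (Af χ) hx (hAmem χ) hp (hAprop χ)
  have uniqB : ∀ (χ : AddChar G ℂ) (y : G), y ∈ G₂ →
      (∀ x ∈ G₁, (F x y : ℂ) * χ x = 1) → y = Bf χ := by
    intro χ y hy hp
    exact dual_unique G₂ G₁ (fun a b => F b a)
      (fun a ha a' ha' t ht => hF2 t a a' ht ha ha') hperfR
      χ y (Bf χ) hy (hBmem χ) hp (hBprop χ)
  set M : Matrix G G ℂ := Matrix.of fun μ ν : G => ∑ μ' : G, ∑ ν' : G,
      f (μ - μ') (ν - ν') * f ν' μ' with hMdef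
  -- Fourier coefficients of f
  have fhat : ∀ (χ : AddChar G ℂ) (x : G),
      ∑ t : G, f x t * χ t = if x = Af χ then 1 else 0 := by
    intro χ x
    by_cases hx : x ∈ G₁
    · have hterm : ∀ t : G, f x t * χ t
          = if t ∈ G₂ then (D:ℂ)⁻¹ * ((F x t : ℂ) * χ t) else 0 := by
        intro t
        rw [hf x t]
        by_cases ht : t ∈ G₂ <;> simp [hx, ht, mul_assoc]
      rw [Finset.sum_congr rfl (fun t _ => hterm t), ← Finset.sum_filter, ← Finset.mul_sum]
      by_cases hxa : x = Af χ
      · rw [if_pos hxa]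
        have hone : ∀ t ∈ univ.filter (· ∈ G₂), (F x t : ℂ) * χ t = 1 := by
          intro t ht
          simp only [mem_filter, mem_univ, true_and] at ht
          rw [hxa]; exact hAprop χ t ht
        rw [Finset.sum_congr rfl hone, Finset.sum_const, nsmul_eq_mul, mul_one]
        have hcard : ((univ.filter (· ∈ G₂)).card : ℂ) = (D : ℂ) := by
          rw [← Fintype.card_subtype, ← Nat.card_eq_fintype_card, hD2]
        rw [hcard, inv_mul_cancel₀ hD0]
      · rw [if_neg hxa]
        obtain ⟨t₀, ht₀, hne⟩ : ∃ t ∈ G₂, (F x t : ℂ) * χ t ≠ 1 := by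
          by_contra hcon; push_neg at hcon
          exact hxa (uniqA χ x hx hcon)
        rw [char_sum_eq_zero G₂ (fun t => (F x t : ℂ) * χ t) ?_ t₀ ht₀ hne, mul_zero]
        intro s hs u hu
        have hc := congrArg Units.val (hF2 x s u hx hs hu)
        push_cast at hc
        rw [hc, AddChar.map_add_eq_mul]; ring
    · have h0 : ∀ t : G, f x t * χ t = 0 := by
        intro t; rw [hf x t]; simp [hx]
      rw [Finset.sum_congr rfl (fun t _ => h0 t), Finset.sum_const_zero,
        if_neg (fun hxa : x = Af χ => hx (by rw [hxa]; exact hAmem χ))]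
  have ghat : ∀ (χ : AddChar G ℂ) (y : G),
      ∑ x : G, f x y * χ x = if y = Bf χ then 1 else 0 := by
    intro χ y
    by_cases hy : y ∈ G₂
    · have hterm : ∀ x : G, f x y * χ x
          = if x ∈ G₁ then (D:ℂ)⁻¹ * ((F x y : ℂ) * χ x) else 0 := by
        intro x
        rw [hf x y]
        by_cases hx : x ∈ G₁ <;> simp [hx, hy, mul_assoc]
      rw [Finset.sum_congr rfl (fun x _ => hterm x), ← Finset.sum_filter, ← Finset.mul_sum]
      by_cases hyb : y = Bf χ
      · rw [if_pos hyb]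
        have hone : ∀ x ∈ univ.filter (· ∈ G₁), (F x y : ℂ) * χ x = 1 := by
          intro x hx
          simp only [mem_filter, mem_univ, true_and] at hx
          rw [hyb]; exact hBprop χ x hx
        rw [Finset.sum_congr rfl hone, Finset.sum_const, nsmul_eq_mul, mul_one]
        have hcard : ((univ.filter (· ∈ G₁)).card : ℂ) = (D : ℂ) := by
          rw [← Fintype.card_subtype, ← Nat.card_eq_fintype_card, hD1]
        rw [hcard, inv_mul_cancel₀ hD0]
      · rw [if_neg hyb]
        obtain ⟨x₀, hx₀, hne⟩ : ∃ x ∈ G₁, (F x y : ℂ) * χ x ≠ 1 := by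
          by_contra hcon; push_neg at hcon
          exact hyb (uniqB χ y hy hcon)
        rw [char_sum_eq_zero G₁ (fun x => (F x y : ℂ) * χ x) ?_ x₀ hx₀ hne, mul_zero]
        intro s hs u hu
        have hc := congrArg Units.val (hF1 s u y hs hu hy)
        push_cast at hc
        rw [hc, AddChar.map_add_eq_mul]; ring
    · have h0 : ∀ x : G, f x y * χ x = 0 := by
        intro x; rw [hf x y]; simp [hy]
      rw [Finset.sum_congr rfl (fun x _ => h0 x), Finset.sum_const_zero,
        if_neg (fun hyb : y = Bf χ => hy (by rw [hyb]; exact hBmem χ))]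
  -- the key computation
  have key : ∀ (χ : AddChar G ℂ) (μ : G),
      ∑ ν : G, M μ ν * χ ν = if μ = Af χ + Bf χ then 1 else 0 := by
    intro χ μ
    calc ∑ ν : G, M μ ν * χ ν
        = ∑ ν : G, ∑ μ' : G, ∑ ν' : G, f (μ - μ') (ν - ν') * f ν' μ' * χ ν := by
          refine Finset.sum_congr rfl fun ν _ => ?_
          rw [hMdef]
          simp only [Matrix.of_apply]
          rw [Finset.sum_mul]
          exact Finset.sum_congr rfl fun μ' _ => by rw [Finset.sum_mul]
      _ = ∑ μ' : G, ∑ ν' : G, ∑ ν : G, f (μ - μ') (ν - ν') * f ν' μ' * χ ν := by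
          rw [Finset.sum_comm]
          exact Finset.sum_congr rfl fun μ' _ => Finset.sum_comm
      _ = ∑ μ' : G, ∑ ν' : G, (if μ - μ' = Af χ then (1:ℂ) else 0) * (f ν' μ' * χ ν') := by
          refine Finset.sum_congr rfl fun μ' _ => Finset.sum_congr rfl fun ν' _ => ?_
          have re : ∑ ν : G, f (μ - μ') (ν - ν') * f ν' μ' * χ ν
              = ∑ t : G, f (μ - μ') t * χ t * (f ν' μ' * χ ν') := by
            refine Fintype.sum_equiv (Equiv.subRight ν') _ _ fun ν => ?_
            simp only [Equiv.subRight_apply]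
            have hχν : (χ ν : ℂ) = χ (ν - ν') * χ ν' := by
              rw [← AddChar.map_add_eq_mul, sub_add_cancel]
            rw [hχν]; ring
          rw [re, ← Finset.sum_mul, fhat χ (μ - μ')]
      _ = ∑ μ' : G, (if μ - μ' = Af χ then (1:ℂ) else 0) * (if μ' = Bf χ then 1 else 0) := by
          refine Finset.sum_congr rfl fun μ' _ => ?_
          rw [← Finset.mul_sum, ghat χ μ']
      _ = (if μ - Bf χ = Af χ then (1:ℂ) else 0) := by
          rw [Finset.sum_eq_single_of_mem (Bf χ) (mem_univ _)
            (fun b _ hb => by rw [if_neg hb, mul_zero])]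
          rw [if_pos rfl, mul_one]
      _ = if μ = Af χ + Bf χ then 1 else 0 := by
          simp only [sub_eq_iff_eq_add]
  -- A, B on trivial character
  have hA1 : Af (1 : AddChar G ℂ) = 0 := by
    refine (uniqA 1 0 (zero_mem _) ?_).symm
    intro t ht
    rw [hF0L t ht]
    simp [AddChar.one_apply]
  have hB1 : Bf (1 : AddChar G ℂ) = 0 := by
    refine (uniqB 1 0 (zero_mem _) ?_).symm
    intro x hx
    rw [hF0R x hx]
    simp [AddChar.one_apply]
  -- multiplicativity of Af, Bf
  have hAmul : ∀ χ ψ : AddChar G ℂ, Af (χ * ψ) = Af χ + Af ψ := by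
    intro χ ψ
    refine (uniqA (χ * ψ) (Af χ + Af ψ) (G₁.add_mem (hAmem χ) (hAmem ψ)) ?_).symm
    intro t ht
    have h := congrArg Units.val (hF1 (Af χ) (Af ψ) t (hAmem χ) (hAmem ψ) ht)
    push_cast at h
    rw [AddChar.mul_apply, h,
      show (F (Af χ) t : ℂ) * (F (Af ψ) t : ℂ) * (χ t * ψ t)
        = ((F (Af χ) t : ℂ) * χ t) * ((F (Af ψ) t : ℂ) * ψ t) by ring,
      hAprop χ t ht, hAprop ψ t ht, one_mul]
  have hBmul : ∀ χ ψ : AddChar G ℂ, Bf (χ * ψ) = Bf χ + Bf ψ := by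
    intro χ ψ
    refine (uniqB (χ * ψ) (Bf χ + Bf ψ) (G₂.add_mem (hBmem χ) (hBmem ψ)) ?_).symm
    intro x hx
    have h := congrArg Units.val (hF2 x (Bf χ) (Bf ψ) hx (hBmem χ) (hBmem ψ))
    push_cast at h
    rw [AddChar.mul_apply, h,
      show (F x (Bf χ) : ℂ) * (F x (Bf ψ) : ℂ) * (χ x * ψ x)
        = ((F x (Bf χ) : ℂ) * χ x) * ((F x (Bf ψ) : ℂ) * ψ x) by ring,
      hBprop χ x hx, hBprop ψ x hx, one_mul]
  have hAinv : ∀ χ : AddChar G ℂ, Af χ⁻¹ = -(Af χ) := by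
    intro χ
    refine (uniqA χ⁻¹ (-(Af χ)) (G₁.neg_mem (hAmem χ)) ?_).symm
    intro t ht
    have h := congrArg Units.val (hFnegL (Af χ) (hAmem χ) t ht)
    push_cast at h
    rw [AddChar.inv_apply, h]
    have h2 := hAprop χ (-t) (G₂.neg_mem ht)
    have h3 := congrArg Units.val (hFnegR (Af χ) (hAmem χ) t ht)
    push_cast at h3
    rwa [h3] at h2
  have hBinv : ∀ χ : AddChar G ℂ, Bf χ⁻¹ = -(Bf χ) := by
    intro χ
    refine (uniqB χ⁻¹ (-(Bf χ)) (G₂.neg_mem (hBmem χ)) ?_).symm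
    intro x hx
    have h := congrArg Units.val (hFnegR x hx (Bf χ) (hBmem χ))
    push_cast at h
    rw [AddChar.inv_apply, h]
    have h2 := hBprop χ (-x) (G₁.neg_mem hx)
    have h3 := congrArg Units.val (hFnegL x hx (Bf χ) (hBmem χ))
    push_cast at h3
    rwa [h3] at h2
  -- kernel triviality from the radical condition
  have hker : (∀ μ₁ μ₂ : G, μ₁ ∈ G₁ → μ₂ ∈ G₂ → μ₁ + μ₂ = 0 →
        (∀ ν₁ ν₂ : G, ν₁ ∈ G₁ → ν₂ ∈ G₂ → ν₁ + ν₂ = 0 →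
          F μ₁ ν₂ * F ν₁ μ₂ = 1) → μ₁ = 0 ∧ μ₂ = 0) →
      ∀ η : AddChar G ℂ, Af η + Bf η = 0 → η = 1 := by
    intro hrad η hs0
    have hBeq : Bf η = -(Af η) := eq_neg_of_add_eq_zero_right hs0
    have hhG1 : Af η ∈ G₁ := hAmem η
    have hhG2 : Af η ∈ G₂ := by
      have h := hBmem η
      rw [hBeq] at h
      simpa using G₂.neg_mem h
    have hprem : ∀ ν₁ ν₂ : G, ν₁ ∈ G₁ → ν₂ ∈ G₂ → ν₁ + ν₂ = 0 →
        F (Af η) ν₂ * F ν₁ (-(Af η)) = 1 := by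
      intro c ν₂ hc hν₂ hsc
      have hν₂eq : ν₂ = -c := eq_neg_of_add_eq_zero_right hsc
      subst hν₂eq
      have hcG2 : c ∈ G₂ := by simpa using G₂.neg_mem hν₂
      have e1 := hAprop η c hcG2
      have e2 := hBprop η c hc
      rw [hBeq] at e2
      have e3 := congrArg Units.val (hFnegR c hc (Af η) hhG2)
      push_cast at e3
      rw [e3] at e2
      have hηc : η c ≠ 0 := by
        intro h0; rw [h0, mul_zero] at e1; exact one_ne_zero e1.symm
      have e4 : (F (Af η) c : ℂ) = ((F c (Af η) : ℂ))⁻¹ :=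
        mul_right_cancel₀ hηc (e1.trans e2.symm)
      rw [hFnegR (Af η) hhG1 c hcG2, hFnegR c hc (Af η) hhG2]
      refine Units.ext ?_
      push_cast
      rw [e4, inv_inv, mul_comm, inv_mul_cancel₀ (Units.ne_zero _)]
    obtain ⟨hh0, -⟩ := hrad (Af η) (-(Af η)) hhG1 (G₂.neg_mem hhG2)
      (add_neg_cancel _) hprem
    have hB0 : Bf η = 0 := by rw [hBeq, hh0, neg_zero]
    refine DFunLike.ext _ _ fun g => ?_
    obtain ⟨x, hx, t, ht, rfl⟩ : ∃ x ∈ G₁, ∃ t ∈ G₂, x + t = g := by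
      have hg : g ∈ G₁ ⊔ G₂ := by rw [hsum]; exact AddSubgroup.mem_top g
      exact AddSubgroup.mem_sup.mp hg
    have hx1 : η x = 1 := by
      have h := hBprop η x hx
      rw [hB0, hF0R x hx] at h
      simpa using h
    have ht1 : η t = 1 := by
      have h := hAprop η t ht
      rw [hh0, hF0L t ht] at h
      simpa using h
    rw [AddChar.map_add_eq_mul, hx1, ht1, mul_one, AddChar.one_apply]
  constructor
  · -- IsUnit → Rad₀ trivial
    intro hU
    by_contra hcon
    push_neg at hcon
    obtain ⟨μ₁, μ₂, hμ₁, hμ₂, hsum0, hprem, hne0⟩ := hcon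
    have hμ₂eq : μ₂ = -μ₁ := eq_neg_of_add_eq_zero_right hsum0
    have hh1 : μ₁ ∈ G₁ := hμ₁
    have hh2 : μ₁ ∈ G₂ := by
      have := hμ₂; rw [hμ₂eq] at this; simpa using G₂.neg_mem this
    have hne : μ₁ ≠ 0 := by
      intro h0
      exact hne0 h0 (by rw [hμ₂eq, h0, neg_zero])
    have hrad : ∀ c, c ∈ G₁ → c ∈ G₂ → F c μ₁ * F μ₁ c = 1 := by
      intro c hc1 hc2
      have h := hprem c (-c) hc1 (G₂.neg_mem hc2) (add_neg_cancel c)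
      rw [hμ₂eq, hFnegR μ₁ hh1 c hc2, hFnegR c hc1 μ₁ hh2, ← mul_inv_rev,
        inv_eq_one] at h
      exact h
    have hdec : ∀ g : G, ∃ x ∈ G₁, ∃ t ∈ G₂, x + t = g := by
      intro g
      have hg : g ∈ G₁ ⊔ G₂ := by rw [hsum]; exact AddSubgroup.mem_top g
      exact AddSubgroup.mem_sup.mp hg
    choose X hX T hT hXT using hdec
    have W : ∀ (g x t : G), x ∈ G₁ → t ∈ G₂ → x + t = g →
        (F (X g) μ₁ : ℂ) * ((F μ₁ (T g) : ℂ))⁻¹ = (F x μ₁ : ℂ) * ((F μ₁ t : ℂ))⁻¹ := by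
      intro g x t hx ht hxt
      have hc1 : x - X g ∈ G₁ := G₁.sub_mem hx (hX g)
      have hceq : x - X g = T g - t := by
        rw [sub_eq_sub_iff_add_eq_add, hxt, add_comm (T g) (X g), hXT g]
      have hc2 : x - X g ∈ G₂ := by rw [hceq]; exact G₂.sub_mem (hT g) ht
      have hx' : x = X g + (x - X g) := by abel
      have ht' : T g = t + (x - X g) := by rw [hceq]; abel
      have u1 : F x μ₁ = F (X g) μ₁ * F (x - X g) μ₁ := by
        conv_lhs => rw [hx']
        exact hF1 (X g) (x - X g) μ₁ (hX g) hc1 hh2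
      have u2 : F μ₁ (T g) = F μ₁ t * F μ₁ (x - X g) := by
        conv_lhs => rw [ht']
        exact hF2 μ₁ t (x - X g) hh1 ht hc2
      have u3 := hrad (x - X g) hc1 hc2
      have v1 := congrArg Units.val u1
      have v2 := congrArg Units.val u2
      have v3 := congrArg Units.val u3
      push_cast at v1 v2 v3
      have he : (F (x - X g) μ₁ : ℂ) = ((F μ₁ (x - X g) : ℂ))⁻¹ :=
        eq_inv_of_mul_eq_one_left v3
      rw [v1, v2, mul_inv, he]
      ring
    set φ : G → ℂ := fun g => (F (X g) μ₁ : ℂ) * ((F μ₁ (T g) : ℂ))⁻¹ with hφ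
    have hη0 : φ 0 = 1 := by
      rw [hφ]
      dsimp only
      rw [W 0 0 0 (zero_mem _) (zero_mem _) (add_zero 0), hF0L μ₁ hh2, hF0R μ₁ hh1]
      simp
    have hηadd : ∀ a b : G, φ (a + b) = φ a * φ b := by
      intro a b
      have hmem1 : X a + X b ∈ G₁ := G₁.add_mem (hX a) (hX b)
      have hmem2 : T a + T b ∈ G₂ := G₂.add_mem (hT a) (hT b)
      have hdecab : (X a + X b) + (T a + T b) = a + b := by
        rw [add_add_add_comm, hXT a, hXT b]
      rw [hφ]
      dsimp only
      rw [W (a + b) (X a + X b) (T a + T b) hmem1 hmem2 hdecab]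
      have v1 := congrArg Units.val (hF1 (X a) (X b) μ₁ (hX a) (hX b) hh2)
      have v2 := congrArg Units.val (hF2 μ₁ (T a) (T b) hh1 (hT a) (hT b))
      push_cast at v1 v2
      rw [v1, v2, mul_inv]
      ring
    set η : AddChar G ℂ :=
      { toFun := φ, map_zero_eq_one' := hη0, map_add_eq_mul' := hηadd } with hηdef
    have hηapp : ∀ g, η g = φ g := fun g => rfl
    have hAη : Af η = μ₁ := by
      refine (uniqA η μ₁ hh1 ?_).symm
      intro t ht
      rw [hηapp, hφ]
      dsimp only
      rw [W t 0 t (zero_mem _) ht (zero_add t), hF0L μ₁ hh2, Units.val_one, one_mul,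
        mul_inv_cancel₀ (Units.ne_zero _)]
    have hBη : Bf η = -μ₁ := by
      refine (uniqB η (-μ₁) (G₂.neg_mem hh2) ?_).symm
      intro x hx
      rw [hηapp, hφ]
      dsimp only
      rw [W x x 0 hx (zero_mem _) (add_zero x), hF0R μ₁ hh1, Units.val_one, inv_one,
        mul_one]
      have h := congrArg Units.val (hFnegR x hx μ₁ hh2)
      push_cast at h
      rw [h, inv_mul_cancel₀ (Units.ne_zero _)]
    -- the nonzero kernel vector
    have hMv : ∀ μ : G, ∑ ν : G, M μ ν * (η ν - 1) = 0 := by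
      intro μ
      have hsplit : ∑ ν : G, M μ ν * (η ν - 1)
          = (∑ ν : G, M μ ν * η ν) - (∑ ν : G, M μ ν * (1 : AddChar G ℂ) ν) := by
        rw [← Finset.sum_sub_distrib]
        refine Finset.sum_congr rfl fun ν _ => ?_
        rw [AddChar.one_apply]
        ring
      rw [hsplit, key η μ, key 1 μ, hAη, hBη, hA1, hB1, add_zero, add_neg_cancel,
        sub_self]
    obtain ⟨x₀, hx₀, hx₀ne⟩ : ∃ x ∈ G₁, F x μ₁ ≠ 1 := by
      by_contra hcon2; push_neg at hcon2
      exact hne (hperfR μ₁ hh2 hcon2)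
    have hvne : η x₀ - 1 ≠ 0 := by
      rw [hηapp, hφ]
      dsimp only
      rw [W x₀ x₀ 0 hx₀ (zero_mem _) (add_zero x₀), hF0R μ₁ hh1, Units.val_one,
        inv_one, mul_one]
      intro hc0
      have : (F x₀ μ₁ : ℂ) = 1 := by
        have := sub_eq_zero.mp hc0; exact this
      exact hx₀ne (Units.ext (by rw [this, Units.val_one]))
    obtain ⟨u, hu⟩ := hU
    have hvec : M.mulVec (fun g => η g - 1) = 0 := by
      funext μ
      rw [Matrix.mulVec, dotProduct]
      exact hMv μ
    have hv0 : (fun g => η g - 1) = (0 : G → ℂ) := by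
      calc (fun g => η g - 1) = (1 : Matrix G G ℂ).mulVec (fun g => η g - 1) :=
            (Matrix.one_mulVec _).symm
        _ = ((↑u⁻¹ * ↑u : Matrix G G ℂ)).mulVec (fun g => η g - 1) := by
            rw [u.inv_mul]
        _ = (↑u⁻¹ : Matrix G G ℂ).mulVec (M.mulVec (fun g => η g - 1)) := by
            rw [← Matrix.mulVec_mulVec, hu]
        _ = 0 := by rw [hvec, Matrix.mulVec_zero]
    exact hvne (congrFun hv0 x₀)
  · -- Rad₀ trivial → IsUnit
    intro hrad
    have hinj : Function.Injective (fun χ : AddChar G ℂ => Af χ + Bf χ) := by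
      intro χ ψ hsχψ
      dsimp only at hsχψ
      have hη : Af (χ * ψ⁻¹) + Bf (χ * ψ⁻¹) = 0 := by
        rw [hAmul, hBmul, hAinv, hBinv,
          show Af χ + -Af ψ + (Bf χ + -Bf ψ) = (Af χ + Bf χ) - (Af ψ + Bf ψ) by abel,
          hsχψ, sub_self]
      have := hker hrad (χ * ψ⁻¹) hη
      exact mul_inv_eq_one.mp this
    have hbij : Function.Bijective (fun χ : AddChar G ℂ => Af χ + Bf χ) := by
      rw [Fintype.bijective_iff_injective_and_card]
      exact ⟨hinj, AddChar.card_eq⟩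
    choose ξ hξ using hbij.surjective
    have hMN : M * (Matrix.of fun ν g : G => (ξ g) ν) = 1 := by
      ext μ g
      rw [Matrix.mul_apply]
      simp only [Matrix.of_apply]
      have hg := hξ g
      dsimp only at hg
      rw [key (ξ g) μ, hg, Matrix.one_apply]
    exact (Matrix.isUnit_iff_isUnit_det _).mpr (Matrix.isUnit_det_of_right_inverse hMN)
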